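/- Let g ∈ L²(ℝ) be a window function, let s > 0, and let c : ℤ → ℂ be a finitely supported sequence. Define f = Σ_{k∈ℤ} c_k T_{sk}(Rg) and f_× = Σ_{k∈ℤ} conj(c_k) T_{sk}(Rg) (finite sums in L²(ℝ)). Then |V_g f(x, n/s)| = |V_g f_×(x, n/s)| for every x ∈ ℝ and every n ∈ ℤ; that is, the spectrograms of f and f_× agree pointwise on the parallel lines ℝ × (1/s)ℤ. -/

import Mathlib

open MeasureTheory Complex Real

/-- The short-time Fourier transform of `f ∈ L²(ℝ)` with respect to the window `g ∈ L²(ℝ)`: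
`V_g f (x, ω) = ∫ f(t) conj(g(t-x)) e^{-2πiωt} dt`. -/
noncomputable def STFT (g f : Lp ℂ 2 (volume : Measure ℝ)) (x ω : ℝ) : ℂ :=
  ∫ t : ℝ, f t * (starRingEnd ℂ) (g (t - x)) * Complex.exp (-2 * Real.pi * Complex.I * ω * t)

/-- `f` and `h` agree up to a global phase: `f = ν • h` for some unimodular `ν ∈ ℂ`. -/
def SamePhase (f h : Lp ℂ 2 (volume : Measure ℝ)) : Prop :=
  ∃ ν : ℂ, ‖ν‖ = 1 ∧ f = ν • h

/-- Translation operator `T_τ` on `L²(ℝ)`: `(T_τ f)(t) = f (t - τ)`. -/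
noncomputable def Translate (τ : ℝ) (f : Lp ℂ 2 (volume : Measure ℝ)) :
    Lp ℂ 2 (volume : Measure ℝ) :=
  Lp.compMeasurePreserving (fun t => t - τ) (measurePreserving_sub_right volume τ) f

/-- Reflection operator on `L²(ℝ)`: `(R f)(t) = f (-t)`. -/
noncomputable def Reflect (f : Lp ℂ 2 (volume : Measure ℝ)) : Lp ℂ 2 (volume : Measure ℝ) :=
  Lp.compMeasurePreserving (fun t => -t) (Measure.measurePreserving_neg volume) f

/- ---------- auxiliary lemmas ---------- -/

lemma translate_coeFn (τ : ℝ) (f : Lp ℂ 2 (volume : Measure ℝ)) :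
    (Translate τ f : ℝ → ℂ) =ᵐ[volume] fun t => f (t - τ) :=
  Lp.coeFn_compMeasurePreserving f (measurePreserving_sub_right volume τ)

lemma translate_reflect_coeFn (g : Lp ℂ 2 (volume : Measure ℝ)) (τ : ℝ) :
    (Translate τ (Reflect g) : ℝ → ℂ) =ᵐ[volume] fun t => g (τ - t) := by
  have h1 := translate_coeFn τ (Reflect g)
  have h2 : (Reflect g : ℝ → ℂ) =ᵐ[volume] fun t => g (-t) :=
    Lp.coeFn_compMeasurePreserving g (Measure.measurePreserving_neg volume)
  have h3 : ((Reflect g : ℝ → ℂ) ∘ (fun t => t - τ)) =ᵐ[volume]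
      ((fun t => g (-t)) ∘ (fun t => t - τ)) := by
    apply ae_eq_comp ((measurePreserving_sub_right volume τ).measurable.aemeasurable)
    rw [(measurePreserving_sub_right volume τ).map_eq]
    exact h2
  refine h1.trans (h3.trans ?_)
  have : ((fun t => g (-t)) ∘ (fun t : ℝ => t - τ)) = fun t => g (τ - t) := by
    funext t; simp [Function.comp, neg_sub]
  rw [this]

lemma stft_integrand_integrable (g f : Lp ℂ 2 (volume : Measure ℝ)) (x ω : ℝ) :
    Integrable (fun t : ℝ =>
      f t * (starRingEnd ℂ) (g (t - x)) * Complex.exp (-2 * Real.pi * Complex.I * ω * t))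
      volume := by
  have hinner := L2.integrable_inner (𝕜 := ℂ) (Translate x g) f
  have h1 : Integrable (fun t : ℝ => (starRingEnd ℂ) ((Translate x g) t) * f t) volume := by
    refine (by simpa [RCLike.inner_apply] using hinner :
      Integrable (fun t : ℝ => f t * (starRingEnd ℂ) ((Translate x g) t)) volume).congr ?_
    filter_upwards with t
    ring
  have h2 : Integrable (fun t : ℝ => (starRingEnd ℂ) (g (t - x)) * f t) volume := by
    refine h1.congr ?_
    filter_upwards [translate_coeFn x g] with t ht
    rw [ht]
  have hexp_meas : AEStronglyMeasurable
      (fun t : ℝ => Complex.exp (-2 * Real.pi * Complex.I * ω * t)) volume := by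
    refine (Complex.continuous_exp.comp ?_).aestronglyMeasurable
    exact (continuous_const.mul Complex.continuous_ofReal)
  have hexp_bdd : ∀ t : ℝ, ‖Complex.exp (-2 * Real.pi * Complex.I * ω * t)‖ ≤ 1 := by
    intro t
    have : (-2 * (Real.pi : ℂ) * Complex.I * (ω : ℂ) * (t : ℂ)) =
        ((-2 * Real.pi * ω * t : ℝ) : ℂ) * Complex.I := by push_cast; ring
    rw [this, Complex.norm_exp_ofReal_mul_I]
  have h3 := h2.bdd_mul hexp_meas (Filter.Eventually.of_forall hexp_bdd)
  refine h3.congr ?_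
  filter_upwards with t
  ring

lemma stft_sum (g : Lp ℂ 2 (volume : Measure ℝ)) (S : Finset ℤ) (a : ℤ → ℂ)
    (F : ℤ → Lp ℂ 2 (volume : Measure ℝ)) (x ω : ℝ) :
    STFT g (∑ k ∈ S, a k • F k) x ω = ∑ k ∈ S, a k * STFT g (F k) x ω := by
  classical
  induction S using Finset.cons_induction with
  | empty =>
      simp only [Finset.sum_empty, STFT]
      have h0 : ((0 : Lp ℂ 2 (volume : Measure ℝ)) : ℝ → ℂ) =ᵐ[volume] 0 := Lp.coeFn_zero ℂ 2 _
      rw [show (∫ t : ℝ, ((0 : Lp ℂ 2 (volume : Measure ℝ)) : ℝ → ℂ) t *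
          (starRingEnd ℂ) (g (t - x)) * Complex.exp (-2 * Real.pi * Complex.I * ω * t)) = 0 from ?_]
      refine (integral_congr_ae (g := fun _ => (0:ℂ)) ?_).trans (integral_zero ℝ ℂ)
      filter_upwards [h0] with t ht
      simp [ht]
  | cons k S hk ih =>
      rw [Finset.sum_cons, Finset.sum_cons, ← ih]
      have hadd : ((a k • F k + ∑ j ∈ S, a j • F j : Lp ℂ 2 (volume : Measure ℝ)) : ℝ → ℂ)
          =ᵐ[volume] fun t => a k * (F k) t + ((∑ j ∈ S, a j • F j : Lp ℂ 2 (volume : Measure ℝ)) : ℝ → ℂ) t := by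
        filter_upwards [Lp.coeFn_add (a k • F k) (∑ j ∈ S, a j • F j),
          Lp.coeFn_smul (a k) (F k)] with t h1 h2
        simp only [h1, Pi.add_apply, h2, Pi.smul_apply, smul_eq_mul]
      unfold STFT
      rw [integral_congr_ae (g := fun t =>
          a k * ((F k) t * (starRingEnd ℂ) (g (t - x)) * Complex.exp (-2 * Real.pi * Complex.I * ω * t)) +
          ((∑ j ∈ S, a j • F j : Lp ℂ 2 (volume : Measure ℝ)) : ℝ → ℂ) t *
            (starRingEnd ℂ) (g (t - x)) * Complex.exp (-2 * Real.pi * Complex.I * ω * t)) ?_]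
      · rw [integral_add ((stft_integrand_integrable g (F k) x ω).const_mul (a k))
          (stft_integrand_integrable g (∑ j ∈ S, a j • F j) x ω),
          integral_const_mul]
      · filter_upwards [hadd] with t ht
        rw [ht]
        ring_nf

lemma stft_key (g : Lp ℂ 2 (volume : Measure ℝ)) (s : ℝ) (hs : s ≠ 0) (x : ℝ) (n k : ℤ) :
    (starRingEnd ℂ) (STFT g (Translate (s * k) (Reflect g)) x ((n : ℝ) / s)) =
      Complex.exp (2 * Real.pi * Complex.I * ((n : ℝ) / s : ℝ) * x) *
        STFT g (Translate (s * k) (Reflect g)) x ((n : ℝ) / s) := by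
  set ω : ℝ := (n : ℝ) / s with hω
  set τ : ℝ := s * k with hτ
  set a : ℝ := x + τ with ha
  have hωτ : (ω : ℂ) * (τ : ℂ) = ((n * k : ℤ) : ℂ) := by
    have : ω * τ = ((n * k : ℤ) : ℝ) := by
      rw [hω, hτ]; push_cast; field_simp
    calc (ω : ℂ) * (τ : ℂ) = ((ω * τ : ℝ) : ℂ) := by push_cast; ring
    _ = ((n * k : ℤ) : ℂ) := by rw [this]; push_cast; ring
  have hrepr : STFT g (Translate τ (Reflect g)) x ω =
      ∫ t : ℝ, g (τ - t) * (starRingEnd ℂ) (g (t - x)) *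
        Complex.exp (-2 * Real.pi * Complex.I * ω * t) := by
    refine integral_congr_ae ?_
    filter_upwards [translate_reflect_coeFn g τ] with t ht
    rw [ht]
  set F : ℝ → ℂ := fun t => (starRingEnd ℂ) (g (τ - t)) * g (t - x) *
      Complex.exp (2 * Real.pi * Complex.I * ω * t) with hF
  have hconj : (starRingEnd ℂ) (STFT g (Translate τ (Reflect g)) x ω) = ∫ t : ℝ, F t := by
    rw [hrepr, ← integral_conj]
    refine integral_congr_ae ?_
    filter_upwards with t
    simp only [hF]
    rw [map_mul, map_mul, ← Complex.exp_conj, Complex.conj_conj]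
    congr 1
    simp only [map_mul, map_neg, map_ofNat, Complex.conj_I, Complex.conj_ofReal]
    ring_nf
  have hsub : (∫ t : ℝ, F t) = ∫ u : ℝ, F (a - u) :=
    (integral_sub_left_eq_self F volume a).symm
  have hE : ∀ u : ℝ,
      Complex.exp (2 * Real.pi * Complex.I * ω * (a - u : ℝ)) =
      Complex.exp (2 * Real.pi * Complex.I * ω * x) *
        Complex.exp (-2 * Real.pi * Complex.I * ω * u) := by
    intro u
    have h1 : (2 * (Real.pi : ℂ) * Complex.I * (ω : ℂ) * ((a - u : ℝ) : ℂ)) =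
        2 * (Real.pi : ℂ) * Complex.I * (ω : ℂ) * (x : ℂ) +
        ((n * k : ℤ) : ℂ) * (2 * (Real.pi : ℂ) * Complex.I) +
        (-2 * (Real.pi : ℂ) * Complex.I * (ω : ℂ) * (u : ℂ)) := by
      have : ((a - u : ℝ) : ℂ) = (x : ℂ) + (τ : ℂ) - (u : ℂ) := by
        rw [ha]; push_cast; ring
      rw [this]
      linear_combination (2 * (Real.pi : ℂ) * Complex.I) * hωτ
    rw [h1, Complex.exp_add, Complex.exp_add, Complex.exp_int_mul_two_pi_mul_I, mul_one]
  have hFa : ∀ u : ℝ, F (a - u) =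
      Complex.exp (2 * Real.pi * Complex.I * ω * x) *
        (g (τ - u) * (starRingEnd ℂ) (g (u - x)) *
          Complex.exp (-2 * Real.pi * Complex.I * ω * u)) := by
    intro u
    have e1 : τ - (a - u) = u - x := by rw [ha]; ring
    have e2 : (a - u) - x = τ - u := by rw [ha]; ring
    rw [hF]
    simp only [e1, e2, hE u]
    ring
  rw [hconj, hsub]
  calc (∫ u : ℝ, F (a - u)) =
      ∫ u : ℝ, Complex.exp (2 * Real.pi * Complex.I * ω * x) *
        (g (τ - u) * (starRingEnd ℂ) (g (u - x)) *
          Complex.exp (-2 * Real.pi * Complex.I * ω * u)) := by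
        exact integral_congr_ae (Filter.Eventually.of_forall hFa)
    _ = Complex.exp (2 * Real.pi * Complex.I * ω * x) *
        ∫ u : ℝ, g (τ - u) * (starRingEnd ℂ) (g (u - x)) *
          Complex.exp (-2 * Real.pi * Complex.I * ω * u) := integral_const_mul _ _
    _ = _ := by rw [← hrepr]

/-- If `f = ∑ₖ cₖ T_{sk}(Rg)` and `f_× = ∑ₖ conj(cₖ) T_{sk}(Rg)` for a finitely supported
sequence `c`, then the spectrograms of `f` and `f_×` with window `g` agree pointwise on the
parallel lines `ℝ × (1/s)ℤ`. -/
theorem stmt5 (g : Lp ℂ 2 (volume : Measure ℝ)) (s : ℝ) (hs : 0 < s) (c : ℤ →₀ ℂ) :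
    ∀ x : ℝ, ∀ n : ℤ,
      ‖STFT g (∑ k ∈ c.support, c k • Translate (s * k) (Reflect g)) x (n / s)‖ =
      ‖STFT g
        (∑ k ∈ c.support, (starRingEnd ℂ) (c k) • Translate (s * k) (Reflect g)) x (n / s)‖ := by
  intro x n
  set ω : ℝ := (n : ℝ) / s with hω
  set E : ℂ := Complex.exp (2 * Real.pi * Complex.I * ω * x) with hEdef
  set A : ℤ → ℂ := fun k => STFT g (Translate (s * k) (Reflect g)) x ω with hA
  have hL : STFT g (∑ k ∈ c.support, c k • Translate (s * k) (Reflect g)) x ω =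
      ∑ k ∈ c.support, c k * A k := stft_sum g c.support _ _ x ω
  have hR : STFT g (∑ k ∈ c.support, (starRingEnd ℂ) (c k) • Translate (s * k) (Reflect g)) x ω =
      ∑ k ∈ c.support, (starRingEnd ℂ) (c k) * A k := stft_sum g c.support _ _ x ω
  have hkey : ∀ k : ℤ, (starRingEnd ℂ) (A k) = E * A k := fun k => stft_key g s hs.ne' x n k
  have hconjsum : (starRingEnd ℂ) (∑ k ∈ c.support, c k * A k) =
      E * ∑ k ∈ c.support, (starRingEnd ℂ) (c k) * A k := by
    rw [map_sum, Finset.mul_sum]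
    refine Finset.sum_congr rfl fun k _ => ?_
    rw [map_mul, hkey k]; ring
  have hEabs : ‖E‖ = 1 := by
    have : (2 * (Real.pi : ℂ) * Complex.I * (ω : ℂ) * (x : ℂ)) =
        ((2 * Real.pi * ω * x : ℝ) : ℂ) * Complex.I := by push_cast; ring
    rw [hEdef, this, Complex.norm_exp_ofReal_mul_I]
  rw [hL, hR]
  calc ‖∑ k ∈ c.support, c k * A k‖
      = ‖(starRingEnd ℂ) (∑ k ∈ c.support, c k * A k)‖ := (Complex.norm_conj _).symm
    _ = ‖E * ∑ k ∈ c.support, (starRingEnd ℂ) (c k) * A k‖ := by rw [hconjsum]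
    _ = ‖∑ k ∈ c.support, (starRingEnd ℂ) (c k) * A k‖ := by
        rw [norm_mul, hEabs, one_mul]
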